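/- For all real w > 0 and all positive integers n, the identity (a_n(w)·c_n(w) − b_n(w)²)/(w·a_n(w)²) = (1/(w−1)²)·(1 − (n+1)²·wⁿ/a_n(w)²) holds for w ≠ 1, where a_n(w) = ∑_{j=0}^n w^j, b_n(w) = ∑_{j=1}^n j·w^j, c_n(w) = ∑_{j=0}^n j²·w^j. -/

import Mathlib

open Finset Real

noncomputable def aa (n : ℕ) (w : ℝ) : ℝ := ∑ j ∈ Finset.range (n+1), w ^ j
noncomputable def bb (n : ℕ) (w : ℝ) : ℝ := ∑ j ∈ Finset.range (n+1), (j : ℝ) * w ^ j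
noncomputable def cc (n : ℕ) (w : ℝ) : ℝ := ∑ j ∈ Finset.range (n+1), (j : ℝ)^2 * w ^ j

lemma aa_cf (n : ℕ) (w : ℝ) : (w - 1) * aa n w = w ^ (n+1) - 1 := by
  induction n with
  | zero => simp [aa]
  | succ m ih =>
    rw [aa, Finset.sum_range_succ, ← aa, mul_add, ih]
    ring

lemma bb_cf (n : ℕ) (w : ℝ) :
    (w - 1)^2 * bb n w = n * w ^ (n+2) - (n+1) * w ^ (n+1) + w := by
  induction n with
  | zero => simp [bb]
  | succ m ih =>
    rw [bb, Finset.sum_range_succ, ← bb]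
    push_cast
    push_cast at ih
    rw [mul_add, ih]
    ring

lemma cc_cf (n : ℕ) (w : ℝ) :
    (w - 1)^3 * cc n w =
      (n:ℝ)^2 * w ^ (n+3) - (2*(n:ℝ)^2 + 2*n - 1) * w ^ (n+2)
        + ((n:ℝ)+1)^2 * w ^ (n+1) - w^2 - w := by
  induction n with
  | zero => simp [cc]
  | succ m ih =>
    rw [cc, Finset.sum_range_succ, ← cc]
    push_cast
    push_cast at ih
    rw [mul_add, ih]
    ring

theorem stmt0 (n : ℕ) (hn : 1 ≤ n) (w : ℝ) (hw : 0 < w) (hw1 : w ≠ 1) :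
    (aa n w * cc n w - (bb n w)^2) / (w * (aa n w)^2) =
      (1 / (w - 1)^2) * (1 - (n + 1 : ℝ)^2 * w ^ n / (aa n w)^2) := by
  have hwm : w - 1 ≠ 0 := sub_ne_zero.mpr hw1
  have hA0 : 0 < aa n w := by
    apply Finset.sum_pos
    · exact fun j _ => pow_pos hw j
    · exact ⟨0, Finset.mem_range.mpr (Nat.succ_pos n)⟩
  have h4 : ((w-1) * aa n w) * ((w-1)^3 * cc n w) - ((w-1)^2 * bb n w)^2
      = w * (((w-1) * aa n w)^2 - ((n:ℝ)+1)^2 * w ^ n * (w-1)^2) := by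
    rw [aa_cf, bb_cf, cc_cf]
    ring
  have hK : (w-1)^2 * (aa n w * cc n w - (bb n w)^2)
      = w * ((aa n w)^2 - ((n:ℝ)+1)^2 * w ^ n) := by
    have h2 : (w-1)^2 ≠ 0 := pow_ne_zero _ hwm
    apply mul_left_cancel₀ h2
    linear_combination h4
  have hA2 : (aa n w)^2 ≠ 0 := pow_ne_zero _ (ne_of_gt hA0)
  have hkey : (1 / (w - 1)^2) * (1 - (n + 1 : ℝ)^2 * w ^ n / (aa n w)^2)
      = (w * ((aa n w)^2 - ((n:ℝ)+1)^2 * w ^ n)) / (w * (w-1)^2 * (aa n w)^2) := by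
    field_simp
  rw [hkey, div_eq_div_iff (by positivity) (by positivity)]
  linear_combination (w * (aa n w)^2) * hK
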